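/- For a random caterpillar with m ≥ 2 spine nodes, the variance of the Zagreb index Z_n equals 2n((m-1)n + 3m - 7)/m^2. -/
import Mathlib


open Finset Filter MeasureTheory

/-- Number of leaves attached to spine node `i` given attachment choices `ω`. -/
def leafCount {m n : ℕ} (ω : Fin n → Fin m) (i : Fin m) : ℕ :=
  (Finset.univ.filter (fun j => ω j = i)).card

/-- Degree of spine node `i` in the caterpillar: its leaf count plus 1 for an
end spine node, plus 2 for an interior spine node. -/
def degS {m n : ℕ} (ω : Fin n → Fin m) (i : Fin m) : ℕ :=
  leafCount ω i + (if i.val = 0 ∨ i.val = m - 1 then 1 else 2)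

/-- Zagreb index: sum of squared degrees of all nodes (each of the `n` leaves has degree 1). -/
def zagreb {m n : ℕ} (ω : Fin n → Fin m) : ℕ :=
  (∑ i, (degS ω i) ^ 2) + n


lemma leafCount_cons {m n : ℕ} (ω : Fin n → Fin m) (x i : Fin m) :
    leafCount (Fin.cons x ω) i = leafCount ω i + (if x = i then 1 else 0) := by
  simp only [leafCount, Finset.card_filter]
  rw [Fin.sum_univ_succ]
  simp [add_comm]

lemma degS_cons {m n : ℕ} (ω : Fin n → Fin m) (x i : Fin m) :
    degS (Fin.cons x ω) i = degS ω i + (if x = i then 1 else 0) := by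
  simp only [degS, leafCount_cons]; ring

lemma zagreb_cons {m n : ℕ} (ω : Fin n → Fin m) (x : Fin m) :
    zagreb (Fin.cons x ω) = zagreb ω + 2 * degS ω x + 2 := by
  simp only [zagreb, degS_cons]
  have h1 : ∑ i, (degS ω i + (if x = i then 1 else 0)) ^ 2
      = ∑ i, ((degS ω i)^2 + 2 * degS ω i * (if x = i then 1 else 0)
          + (if x = i then 1 else 0)) := by
    apply Finset.sum_congr rfl; intro i _
    by_cases h : x = i <;> simp [h]; ring
  rw [h1, Finset.sum_add_distrib, Finset.sum_add_distrib]
  simp [Finset.sum_ite_eq, mul_comm]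
  ring

lemma ends_filter {m : ℕ} (hm : 2 ≤ m) :
    (univ.filter (fun i : Fin m => i.val = 0 ∨ i.val = m - 1))
      = {⟨0, by omega⟩, ⟨m-1, by omega⟩} := by
  ext i
  simp [Fin.ext_iff]

lemma card_ends {m : ℕ} (hm : 2 ≤ m) :
    (univ.filter (fun i : Fin m => i.val = 0 ∨ i.val = m - 1)).card = 2 := by
  rw [ends_filter hm, Finset.card_insert_of_notMem, Finset.card_singleton]
  simp [Fin.ext_iff]; omega

lemma sum_c {m : ℕ} (hm : 2 ≤ m) (a b : ℝ) :
    ∑ i : Fin m, (if i.val = 0 ∨ i.val = m - 1 then a else b)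
      = 2 * a + ((m : ℝ) - 2) * b := by
  have h2 : (univ.filter (fun i : Fin m => ¬(i.val = 0 ∨ i.val = m - 1))).card = m - 2 := by
    rw [Finset.filter_not, Finset.card_sdiff_of_subset (Finset.filter_subset _ _), card_ends hm]
    simp
  rw [Finset.sum_ite, Finset.sum_const, Finset.sum_const, card_ends hm, h2]
  simp only [nsmul_eq_mul]
  push_cast [Nat.cast_sub hm]
  ring

lemma sum_leafCount {m n : ℕ} (ω : Fin n → Fin m) : ∑ i, leafCount ω i = n := by
  have := Finset.card_eq_sum_card_fiberwise (f := ω) (s := univ) (t := univ)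
    (fun x _ => mem_univ _)
  simpa [leafCount] using this.symm

lemma sum_degS {m n : ℕ} (hm : 2 ≤ m) (ω : Fin n → Fin m) :
    ∑ i, (degS ω i : ℝ) = n + 2 * m - 2 := by
  simp only [degS]
  push_cast
  rw [Finset.sum_add_distrib]
  have h1 : ∑ i, (leafCount ω i : ℝ) = n := by
    rw [← Nat.cast_sum]; exact_mod_cast congrArg (Nat.cast (R := ℝ)) (sum_leafCount ω)
  rw [h1, sum_c hm 1 2]; ring

lemma sum_degS_sq {m n : ℕ} (ω : Fin n → Fin m) :
    ∑ i, (degS ω i : ℝ)^2 = (zagreb ω : ℝ) - n := by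
  have : (zagreb ω : ℝ) = (∑ i, (degS ω i : ℝ)^2) + n := by
    simp only [zagreb]; push_cast; ring
  rw [this]; ring

lemma sum_fun_succ {m n : ℕ} (g : (Fin (n+1) → Fin m) → ℝ) :
    ∑ ω : Fin (n+1) → Fin m, g ω
      = ∑ x : Fin m, ∑ ω : Fin n → Fin m, g (Fin.cons x ω) := by
  rw [← Equiv.sum_comp (Fin.consEquiv (fun _ => Fin m)) g, Fintype.sum_prod_type]
  rfl

lemma sumB {m : ℕ} (hm : 2 ≤ m) : ∀ n : ℕ,
    (m : ℝ) * ∑ ω : Fin n → Fin m, (zagreb ω : ℝ)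
      = (m:ℝ)^n * ((m:ℝ) * (4*m - 6) + n^2 + (6*m - 5)*n) := by
  intro n
  induction n with
  | zero =>
    have hu : ∀ ω : Fin 0 → Fin m, (zagreb ω : ℝ) = 4*m - 6 := by
      intro ω
      have hl : ∀ i, leafCount ω i = 0 := fun i => by simp [leafCount]
      have : (zagreb ω : ℝ) = ∑ i : Fin m,
          (if i.val = 0 ∨ i.val = m - 1 then (1:ℝ) else 4) := by
        simp only [zagreb, degS, hl, zero_add, Nat.cast_add, Nat.cast_sum]
        push_cast
        rw [add_zero]
        apply Finset.sum_congr rfl; intro i _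
        by_cases h : i.val = 0 ∨ i.val = m - 1 <;> simp [h] <;> norm_num
      rw [this, sum_c hm 1 4]; ring
    simp only [hu, Finset.sum_const, card_univ, nsmul_eq_mul]
    simp only [Fintype.card_pi, Fintype.card_fin, Finset.prod_const, Finset.card_univ, pow_zero]
    push_cast
    ring
  | succ n ih =>
    rw [sum_fun_succ (fun ω => (zagreb ω : ℝ)), Finset.sum_comm]
    have step : ∀ ω : Fin n → Fin m,
        ∑ x : Fin m, (zagreb (Fin.cons x ω) : ℝ)
          = (m:ℝ) * (zagreb ω : ℝ) + 2*((n:ℝ) + 2*m - 2) + 2*m := by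
      intro ω
      have : ∀ x : Fin m, (zagreb (Fin.cons x ω) : ℝ)
          = (zagreb ω : ℝ) + 2 * (degS ω x : ℝ) + 2 := by
        intro x; rw [zagreb_cons]; push_cast; ring
      simp only [this]
      rw [Finset.sum_add_distrib, Finset.sum_add_distrib, ← Finset.mul_sum,
        sum_degS hm, Finset.sum_const, Finset.sum_const, card_univ]
      simp [Fintype.card_fin]
      ring
    simp only [step]
    rw [Finset.sum_add_distrib, Finset.sum_add_distrib, ← Finset.mul_sum,
      Finset.sum_const, Finset.sum_const, card_univ]
    simp only [Fintype.card_pi, Fintype.card_fin, Finset.prod_const, Finset.card_univ,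
      nsmul_eq_mul]
    push_cast
    linear_combination (m:ℝ) * ih

lemma sumA {m : ℕ} (hm : 2 ≤ m) : ∀ n : ℕ,
    (m : ℝ)^2 * ∑ ω : Fin n → Fin m, (zagreb ω : ℝ)^2
      = (m:ℝ)^n * (2*n*(((m:ℝ) - 1)*n + 3*m - 7)
          + ((m:ℝ) * (4*m - 6) + n^2 + (6*m - 5)*n)^2) := by
  intro n
  induction n with
  | zero =>
    have hu : ∀ ω : Fin 0 → Fin m, (zagreb ω : ℝ) = 4*m - 6 := by
      intro ω
      have hl : ∀ i, leafCount ω i = 0 := fun i => by simp [leafCount]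
      have : (zagreb ω : ℝ) = ∑ i : Fin m,
          (if i.val = 0 ∨ i.val = m - 1 then (1:ℝ) else 4) := by
        simp only [zagreb, degS, hl, zero_add, Nat.cast_add, Nat.cast_sum]
        push_cast
        rw [add_zero]
        apply Finset.sum_congr rfl; intro i _
        by_cases h : i.val = 0 ∨ i.val = m - 1 <;> simp [h] <;> norm_num
      rw [this, sum_c hm 1 4]; ring
    simp only [hu, Finset.sum_const, card_univ, nsmul_eq_mul]
    simp only [Fintype.card_pi, Fintype.card_fin, Finset.prod_const, Finset.card_univ, pow_zero]
    push_cast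
    ring
  | succ n ih =>
    rw [sum_fun_succ (fun ω => (zagreb ω : ℝ)^2), Finset.sum_comm]
    have step : ∀ ω : Fin n → Fin m,
        ∑ x : Fin m, (zagreb (Fin.cons x ω) : ℝ)^2
          = (m:ℝ) * (zagreb ω : ℝ)^2
            + (4 + 4*((n:ℝ) + 2*m - 2) + 4*m) * (zagreb ω : ℝ)
            + (-4*(n:ℝ) + 4*m + 8*((n:ℝ) + 2*m - 2)) := by
      intro ω
      have hx : ∀ x : Fin m, (zagreb (Fin.cons x ω) : ℝ)^2
          = ((zagreb ω : ℝ)^2 + 4*(zagreb ω : ℝ) + 4)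
            + ((4*(zagreb ω : ℝ) + 8) * (degS ω x : ℝ) + 4*(degS ω x : ℝ)^2) := by
        intro x; rw [zagreb_cons]; push_cast; ring
      simp only [hx]
      rw [Finset.sum_add_distrib, Finset.sum_const, card_univ,
        Finset.sum_add_distrib, ← Finset.mul_sum, ← Finset.mul_sum,
        sum_degS hm, sum_degS_sq]
      simp only [Fintype.card_fin, nsmul_eq_mul]
      ring
    simp only [step]
    rw [Finset.sum_add_distrib, Finset.sum_add_distrib, ← Finset.mul_sum, ← Finset.mul_sum,
      Finset.sum_const, card_univ]
    simp only [Fintype.card_pi, Fintype.card_fin, Finset.prod_const, Finset.card_univ,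
      nsmul_eq_mul]
    push_cast
    linear_combination (m:ℝ) * ih
      + ((4 + 4*((n:ℝ) + 2*(m:ℝ) - 2) + 4*(m:ℝ)) * (m:ℝ)) * sumB hm n

/-- The variance of the Zagreb index of a random caterpillar with `m ≥ 2` spine nodes
equals `2n((m-1)n + 3m - 7)/m²`. -/
theorem variance_zagreb (m n : ℕ) (hm : 2 ≤ m) :
    (∑ ω : Fin n → Fin m, (zagreb ω : ℝ) ^ 2) / (m : ℝ) ^ n
      - ((∑ ω : Fin n → Fin m, (zagreb ω : ℝ)) / (m : ℝ) ^ n) ^ 2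
      = 2 * n * ((m - 1) * n + 3 * m - 7) / m ^ 2 := by
  have hm0 : (m : ℝ) ≠ 0 := by positivity
  have hpn : (m : ℝ)^n ≠ 0 := pow_ne_zero _ hm0
  have hB := sumB hm n
  have hA := sumA hm n
  have h1 : ∑ ω : Fin n → Fin m, (zagreb ω : ℝ)
      = (m:ℝ)^n * ((m:ℝ) * (4*m - 6) + n^2 + (6*m - 5)*n) / m := by
    field_simp; linarith [hB]
  have h2 : ∑ ω : Fin n → Fin m, (zagreb ω : ℝ)^2
      = (m:ℝ)^n * (2*n*(((m:ℝ) - 1)*n + 3*m - 7)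
          + ((m:ℝ) * (4*m - 6) + n^2 + (6*m - 5)*n)^2) / m^2 := by
    field_simp; linarith [hA]
  rw [h1, h2]
  field_simp
  ring
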